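/- Assume b = −e and b ≠ 0 (with a, d ∈ ℝ arbitrary). Let u be a solution of the Longstaff–Schwartz equation on Ω, and let ε ∈ ℝ. Then the function w(x,y,t) = (1 − bε·e^{-bt})^{-2d} · exp( 2b²ε·e^{-bt}·y/(1 − bε·e^{-bt}) ) · u( x/(1 − bε·e^{-bt}), y/(1 − bε·e^{-bt}), t + ln(1 − bε·e^{-bt})/b ) satisfies the Longstaff–Schwartz equation at every point (x,y,t) ∈ Ω with 1 − bε·e^{-bt} > 0. -/

import Mathlib

/-- Partial derivative in `x`. -/
noncomputable def pdX (u : ℝ → ℝ → ℝ → ℝ) (x y t : ℝ) : ℝ := deriv (fun z => u z y t) x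

/-- Partial derivative in `y`. -/
noncomputable def pdY (u : ℝ → ℝ → ℝ → ℝ) (x y t : ℝ) : ℝ := deriv (fun z => u x z t) y

/-- Partial derivative in `t`. -/
noncomputable def pdT (u : ℝ → ℝ → ℝ → ℝ) (x y t : ℝ) : ℝ := deriv (fun z => u x y z) t

/-- Second partial derivative in `x`. -/
noncomputable def pdXX (u : ℝ → ℝ → ℝ → ℝ) (x y t : ℝ) : ℝ := deriv (fun z => pdX u z y t) x

/-- Second partial derivative in `y`. -/
noncomputable def pdYY (u : ℝ → ℝ → ℝ → ℝ) (x y t : ℝ) : ℝ := deriv (fun z => pdY u x z t) y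

/-- The domain `Ω = {(x,y,t) : x > 0, y > 0}`. -/
def Omega : Set (ℝ × ℝ × ℝ) := {p | 0 < p.1 ∧ 0 < p.2.1}

/-- The Longstaff–Schwartz (Kolmogorov backward) equation
`u_t = −((a−bx)·u_x + (d−ey)·u_y + (x/2)·u_xx + (y/2)·u_yy)` holds at the point `(x,y,t)`. -/
def LSEq (a b d e : ℝ) (u : ℝ → ℝ → ℝ → ℝ) (x y t : ℝ) : Prop :=
  pdT u x y t =
    -((a - b * x) * pdX u x y t + (d - e * y) * pdY u x y t +
      x / 2 * pdXX u x y t + y / 2 * pdYY u x y t)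

/-- `u` is a solution of the Longstaff–Schwartz equation on `Ω`: it is C² on `Ω` and
satisfies the equation at every point of `Ω`. -/
def IsLSSolution (a b d e : ℝ) (u : ℝ → ℝ → ℝ → ℝ) : Prop :=
  ContDiffOn ℝ 2 (fun p : ℝ × ℝ × ℝ => u p.1 p.2.1 p.2.2) Omega ∧
  ∀ x y t : ℝ, 0 < x → 0 < y → LSEq a b d e u x y t

lemma aux_diff_deriv {f : ℝ → ℝ} {x : ℝ} (h : ContDiffAt ℝ 2 f x) :
    DifferentiableAt ℝ (deriv f) x := by
  obtain ⟨s, hs, hf⟩ := h.contDiffOn (le_refl 2) (by simp)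
  obtain ⟨t, hts, hto, hxt⟩ := mem_nhds_iff.1 hs
  have h1 : ContDiffOn ℝ 1 (deriv f) t :=
    (hf.mono hts).deriv_of_isOpen hto (by norm_num)
  exact (h1.differentiableOn (by norm_num)).differentiableAt (hto.mem_nhds hxt)

lemma clm_decomp3 (L : ℝ × ℝ × ℝ →L[ℝ] ℝ) (p q r : ℝ) :
    L (p, q, r) = p * L (1,0,0) + q * L (0,1,0) + r * L (0,0,1) := by
  have hv : ((p,q,r) : ℝ × ℝ × ℝ) = p • ((1:ℝ),(0:ℝ),(0:ℝ)) + q • ((0:ℝ),(1:ℝ),(0:ℝ))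
      + r • ((0:ℝ),(0:ℝ),(1:ℝ)) := by simp [Prod.ext_iff]
  rw [hv, map_add, map_add, map_smul, map_smul, map_smul]
  simp [smul_eq_mul]

lemma omega_open : IsOpen Omega :=
  (isOpen_lt continuous_const continuous_fst).inter
    (isOpen_lt continuous_const (continuous_fst.comp continuous_snd))

lemma HasDerivAt.congr_d {f : ℝ → ℝ} {v v' x : ℝ} (h : HasDerivAt f v x) (hv : v = v') :
    HasDerivAt f v' x := hv ▸ h

set_option maxHeartbeats 2000000 in
/-- Symmetry of the Longstaff–Schwartz equation when `b = −e ≠ 0` (subcase 2.3, group `G₂`). -/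
theorem ls_symmetry_b_eq_neg_e_G2 (a b d e : ℝ) (hbe : b = -e) (hb : b ≠ 0)
    (u : ℝ → ℝ → ℝ → ℝ) (hu : IsLSSolution a b d e u) (ε : ℝ) :
    ∀ x y t : ℝ, 0 < x → 0 < y → 1 - b * ε * Real.exp (-(b * t)) > 0 →
      LSEq a b d e
        (fun x y t =>
          (1 - b * ε * Real.exp (-(b * t))) ^ (-(2 * d)) *
            Real.exp (2 * b ^ 2 * ε * Real.exp (-(b * t)) * y /
              (1 - b * ε * Real.exp (-(b * t)))) *
            u (x / (1 - b * ε * Real.exp (-(b * t)))) (y / (1 - b * ε * Real.exp (-(b * t))))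
              (t + Real.log (1 - b * ε * Real.exp (-(b * t))) / b))
        x y t := by
  obtain ⟨hC2, hEQ⟩ := hu
  intro x y t hx hy hgt
  have he : e = -b := by rw [hbe]; ring
  simp only [LSEq, pdT, pdX, pdY, pdXX, pdYY]
  rw [he]
  obtain ⟨E, hEdef⟩ : ∃ E, Real.exp (-(b * t)) = E := ⟨_, rfl⟩
  rw [hEdef]
  obtain ⟨P, hPdef⟩ : ∃ P, 1 - b * ε * E = P := ⟨_, rfl⟩
  rw [hPdef]
  have hP : 0 < P := by rw [← hPdef, ← hEdef]; exact hgt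
  have hP0 : P ≠ 0 := ne_of_gt hP
  obtain ⟨τ, hτdef⟩ : ∃ τ, t + Real.log P / b = τ := ⟨_, rfl⟩
  rw [hτdef]
  obtain ⟨A, hAdef⟩ : ∃ A, P ^ (-(2 * d)) = A := ⟨_, rfl⟩
  rw [hAdef]
  obtain ⟨B, hBdef⟩ : ∃ B, Real.exp (2 * b ^ 2 * ε * E * y / P) = B := ⟨_, rfl⟩
  rw [hBdef]
  -- basic facts about u at the transformed point
  have hx' : 0 < x / P := div_pos hx hP
  have hy' : 0 < y / P := div_pos hy hP
  have hmem : ((x / P, y / P, τ) : ℝ × ℝ × ℝ) ∈ Omega := ⟨hx', hy'⟩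
  have hU2 : ContDiffAt ℝ 2 (fun p : ℝ × ℝ × ℝ => u p.1 p.2.1 p.2.2) (x / P, y / P, τ) :=
    hC2.contDiffAt (omega_open.mem_nhds hmem)
  obtain ⟨L, hL⟩ : ∃ L : ℝ × ℝ × ℝ →L[ℝ] ℝ,
      HasFDerivAt (fun p : ℝ × ℝ × ℝ => u p.1 p.2.1 p.2.2) L (x / P, y / P, τ) :=
    ⟨_, (hU2.differentiableAt two_ne_zero).hasFDerivAt⟩
  -- first-order slice derivatives at the transformed point
  have hslX : HasDerivAt (fun z => u z (y / P) τ) (L (1, 0, 0)) (x / P) := by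
    have hc : HasDerivAt (fun z : ℝ => ((z, y / P, τ) : ℝ × ℝ × ℝ)) ((1 : ℝ), (0 : ℝ), (0 : ℝ))
        (x / P) := (hasDerivAt_id' _).prodMk ((hasDerivAt_const _ _).prodMk (hasDerivAt_const _ _))
    exact hL.comp_hasDerivAt _ hc
  have hslY : HasDerivAt (fun z => u (x / P) z τ) (L (0, 1, 0)) (y / P) := by
    have hc : HasDerivAt (fun z : ℝ => ((x / P, z, τ) : ℝ × ℝ × ℝ)) ((0 : ℝ), (1 : ℝ), (0 : ℝ))
        (y / P) := (hasDerivAt_const _ _).prodMk ((hasDerivAt_id' _).prodMk (hasDerivAt_const _ _))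
    exact hL.comp_hasDerivAt _ hc
  have hslT : HasDerivAt (fun z => u (x / P) (y / P) z) (L (0, 0, 1)) τ := by
    have hc : HasDerivAt (fun z : ℝ => ((x / P, y / P, z) : ℝ × ℝ × ℝ)) ((0 : ℝ), (0 : ℝ), (1 : ℝ))
        τ := (hasDerivAt_const _ _).prodMk ((hasDerivAt_const _ _).prodMk (hasDerivAt_id' _))
    exact hL.comp_hasDerivAt _ hc
  -- the PDE for u at the transformed point, in terms of L
  have hEq0 := hEQ (x / P) (y / P) τ hx' hy'
  simp only [LSEq, pdT, pdX, pdY, pdXX, pdYY] at hEq0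
  rw [hslX.deriv, hslY.deriv, hslT.deriv, he] at hEq0
  -- e1 : the x-derivative
  have hdivX : HasDerivAt (fun z : ℝ => z / P) (1 / P) x := by
    simpa using (hasDerivAt_id' x).div_const P
  have hcompX : HasDerivAt (fun z => u (z / P) (y / P) τ) (L (1, 0, 0) * (1 / P)) x :=
    HasDerivAt.comp (h := fun z : ℝ => z / P) x hslX hdivX
  have e1 : deriv (fun z => A * B * u (z / P) (y / P) τ) x = A * B * (L (1, 0, 0) / P) := by
    rw [(hcompX.const_mul (A * B)).deriv]; ring
  -- e2 : the second x-derivative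
  have hC2slX : ContDiffAt ℝ 2 (fun z => u z (y / P) τ) (x / P) := by
    have hc : ContDiffAt ℝ 2 (fun z : ℝ => ((z, y / P, τ) : ℝ × ℝ × ℝ)) (x / P) :=
      contDiffAt_id.prodMk (contDiffAt_const.prodMk contDiffAt_const)
    exact ContDiffAt.comp (f := fun z : ℝ => ((z, y / P, τ) : ℝ × ℝ × ℝ)) (x / P) hU2 hc
  have hdXX : HasDerivAt (fun z => deriv (fun w => u w (y / P) τ) z)
      (deriv (fun z => deriv (fun w => u w (y / P) τ) z) (x / P)) (x / P) :=
    (aux_diff_deriv hC2slX).hasDerivAt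
  have keyX : ∀ z : ℝ, 0 < z →
      deriv (fun z' => A * B * u (z' / P) (y / P) τ) z
        = A * B * (deriv (fun w => u w (y / P) τ) (z / P) / P) := by
    intro z hz
    have hmz : ((z / P, y / P, τ) : ℝ × ℝ × ℝ) ∈ Omega := ⟨div_pos hz hP, hy'⟩
    have hUz : DifferentiableAt ℝ (fun p : ℝ × ℝ × ℝ => u p.1 p.2.1 p.2.2) (z / P, y / P, τ) :=
      (hC2.contDiffAt (omega_open.mem_nhds hmz)).differentiableAt two_ne_zero
    have hdsl : DifferentiableAt ℝ (fun w => u w (y / P) τ) (z / P) := by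
      have hc : DifferentiableAt ℝ (fun w : ℝ => ((w, y / P, τ) : ℝ × ℝ × ℝ)) (z / P) :=
        differentiableAt_id.prodMk ((differentiableAt_const _).prodMk (differentiableAt_const _))
      exact DifferentiableAt.comp (f := fun w : ℝ => ((w, y / P, τ) : ℝ × ℝ × ℝ)) (z / P) hUz hc
    have hdiv : HasDerivAt (fun w : ℝ => w / P) (1 / P) z := by
      simpa using (hasDerivAt_id' z).div_const P
    have hcz : HasDerivAt (fun w => u (w / P) (y / P) τ)
        (deriv (fun w => u w (y / P) τ) (z / P) * (1 / P)) z := HasDerivAt.comp (h := fun w : ℝ => w / P) z hdsl.hasDerivAt hdiv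
    rw [(hcz.const_mul (A * B)).deriv]; ring
  have evX : (fun z => deriv (fun z' => A * B * u (z' / P) (y / P) τ) z)
      =ᶠ[nhds x] (fun z => A * B * (deriv (fun w => u w (y / P) τ) (z / P) / P)) := by
    filter_upwards [eventually_gt_nhds hx] with z hz using keyX z hz
  have hcXX : HasDerivAt (fun z => deriv (fun w => u w (y / P) τ) (z / P))
      (deriv (fun z => deriv (fun w => u w (y / P) τ) z) (x / P) * (1 / P)) x :=
    HasDerivAt.comp (h := fun z : ℝ => z / P) x hdXX hdivX
  have e2 : deriv (fun z => deriv (fun z' => A * B * u (z' / P) (y / P) τ) z) x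
      = A * B * (deriv (fun z => deriv (fun w => u w (y / P) τ) z) (x / P) / P / P) := by
    rw [evX.deriv_eq, ((hcXX.div_const P).const_mul (A * B)).deriv]; ring
  -- e3 : the y-derivative
  have hdivY : HasDerivAt (fun z : ℝ => z / P) (1 / P) y := by
    simpa using (hasDerivAt_id' y).div_const P
  have hBy : HasDerivAt (fun z : ℝ => Real.exp (2 * b ^ 2 * ε * E * z / P))
      (Real.exp (2 * b ^ 2 * ε * E * y / P) * (2 * b ^ 2 * ε * E * 1 / P)) y :=
    (((hasDerivAt_id' y).const_mul (2 * b ^ 2 * ε * E)).div_const P).exp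
  have hcompY : HasDerivAt (fun z => u (x / P) (z / P) τ) (L (0, 1, 0) * (1 / P)) y :=
    HasDerivAt.comp (h := fun z : ℝ => z / P) y hslY hdivY
  have hprod3 : HasDerivAt
      (fun z => A * Real.exp (2 * b ^ 2 * ε * E * z / P) * u (x / P) (z / P) τ)
      (A * (Real.exp (2 * b ^ 2 * ε * E * y / P) * (2 * b ^ 2 * ε * E * 1 / P)) *
          u (x / P) (y / P) τ
        + A * Real.exp (2 * b ^ 2 * ε * E * y / P) * (L (0, 1, 0) * (1 / P))) y :=
    (hBy.const_mul A).mul hcompY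
  have e3 : deriv (fun z => A * Real.exp (2 * b ^ 2 * ε * E * z / P) * u (x / P) (z / P) τ) y
      = A * B * ((2 * b ^ 2 * ε * E / P) * u (x / P) (y / P) τ + L (0, 1, 0) / P) := by
    rw [hprod3.deriv, hBdef]; ring
  -- e4 : the second y-derivative
  have hC2slY : ContDiffAt ℝ 2 (fun z => u (x / P) z τ) (y / P) := by
    have hc : ContDiffAt ℝ 2 (fun z : ℝ => ((x / P, z, τ) : ℝ × ℝ × ℝ)) (y / P) :=
      contDiffAt_const.prodMk (contDiffAt_id.prodMk contDiffAt_const)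
    exact ContDiffAt.comp (f := fun z : ℝ => ((x / P, z, τ) : ℝ × ℝ × ℝ)) (y / P) hU2 hc
  have hdYY : HasDerivAt (fun z => deriv (fun w => u (x / P) w τ) z)
      (deriv (fun z => deriv (fun w => u (x / P) w τ) z) (y / P)) (y / P) :=
    (aux_diff_deriv hC2slY).hasDerivAt
  have keyY : ∀ z : ℝ, 0 < z →
      deriv (fun z' => A * Real.exp (2 * b ^ 2 * ε * E * z' / P) * u (x / P) (z' / P) τ) z
        = A * Real.exp (2 * b ^ 2 * ε * E * z / P) *
            ((2 * b ^ 2 * ε * E / P) * u (x / P) (z / P) τ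
              + deriv (fun w => u (x / P) w τ) (z / P) / P) := by
    intro z hz
    have hmz : ((x / P, z / P, τ) : ℝ × ℝ × ℝ) ∈ Omega := ⟨hx', div_pos hz hP⟩
    have hUz : DifferentiableAt ℝ (fun p : ℝ × ℝ × ℝ => u p.1 p.2.1 p.2.2) (x / P, z / P, τ) :=
      (hC2.contDiffAt (omega_open.mem_nhds hmz)).differentiableAt two_ne_zero
    have hdsl : DifferentiableAt ℝ (fun w => u (x / P) w τ) (z / P) := by
      have hc : DifferentiableAt ℝ (fun w : ℝ => ((x / P, w, τ) : ℝ × ℝ × ℝ)) (z / P) :=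
        (differentiableAt_const _).prodMk (differentiableAt_id.prodMk (differentiableAt_const _))
      exact DifferentiableAt.comp (f := fun w : ℝ => ((x / P, w, τ) : ℝ × ℝ × ℝ)) (z / P) hUz hc
    have hdiv : HasDerivAt (fun w : ℝ => w / P) (1 / P) z := by
      simpa using (hasDerivAt_id' z).div_const P
    have hcz : HasDerivAt (fun w => u (x / P) (w / P) τ)
        (deriv (fun w => u (x / P) w τ) (z / P) * (1 / P)) z := HasDerivAt.comp (h := fun w : ℝ => w / P) z hdsl.hasDerivAt hdiv
    have hBz : HasDerivAt (fun w : ℝ => Real.exp (2 * b ^ 2 * ε * E * w / P))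
        (Real.exp (2 * b ^ 2 * ε * E * z / P) * (2 * b ^ 2 * ε * E * 1 / P)) z :=
      (((hasDerivAt_id' z).const_mul (2 * b ^ 2 * ε * E)).div_const P).exp
    have hpr : HasDerivAt
        (fun w => A * Real.exp (2 * b ^ 2 * ε * E * w / P) * u (x / P) (w / P) τ)
        (A * (Real.exp (2 * b ^ 2 * ε * E * z / P) * (2 * b ^ 2 * ε * E * 1 / P)) *
            u (x / P) (z / P) τ
          + A * Real.exp (2 * b ^ 2 * ε * E * z / P) *
              (deriv (fun w => u (x / P) w τ) (z / P) * (1 / P))) z :=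
      (hBz.const_mul A).mul hcz
    rw [hpr.deriv]; ring
  have evY : (fun z =>
      deriv (fun z' => A * Real.exp (2 * b ^ 2 * ε * E * z' / P) * u (x / P) (z' / P) τ) z)
      =ᶠ[nhds y] (fun z => A * Real.exp (2 * b ^ 2 * ε * E * z / P) *
          ((2 * b ^ 2 * ε * E / P) * u (x / P) (z / P) τ
            + deriv (fun w => u (x / P) w τ) (z / P) / P)) := by
    filter_upwards [eventually_gt_nhds hy] with z hz using keyY z hz
  have hcYY : HasDerivAt (fun z => deriv (fun w => u (x / P) w τ) (z / P))
      (deriv (fun z => deriv (fun w => u (x / P) w τ) z) (y / P) * (1 / P)) y :=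
    HasDerivAt.comp (h := fun z : ℝ => z / P) y hdYY hdivY
  have hsum4 : HasDerivAt (fun z => (2 * b ^ 2 * ε * E / P) * u (x / P) (z / P) τ
        + deriv (fun w => u (x / P) w τ) (z / P) / P)
      ((2 * b ^ 2 * ε * E / P) * (L (0, 1, 0) * (1 / P))
        + deriv (fun z => deriv (fun w => u (x / P) w τ) z) (y / P) * (1 / P) / P) y :=
    (hcompY.const_mul (2 * b ^ 2 * ε * E / P)).add (hcYY.div_const P)
  have hprod4 : HasDerivAt (fun z => A * Real.exp (2 * b ^ 2 * ε * E * z / P) *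
        ((2 * b ^ 2 * ε * E / P) * u (x / P) (z / P) τ
          + deriv (fun w => u (x / P) w τ) (z / P) / P))
      (A * (Real.exp (2 * b ^ 2 * ε * E * y / P) * (2 * b ^ 2 * ε * E * 1 / P)) *
          ((2 * b ^ 2 * ε * E / P) * u (x / P) (y / P) τ
            + deriv (fun w => u (x / P) w τ) (y / P) / P)
        + A * Real.exp (2 * b ^ 2 * ε * E * y / P) *
            ((2 * b ^ 2 * ε * E / P) * (L (0, 1, 0) * (1 / P))
              + deriv (fun z => deriv (fun w => u (x / P) w τ) z) (y / P) * (1 / P) / P)) y :=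
    (hBy.const_mul A).mul hsum4
  have e4 : deriv (fun z =>
      deriv (fun z' => A * Real.exp (2 * b ^ 2 * ε * E * z' / P) * u (x / P) (z' / P) τ) z) y
      = A * B * ((2 * b ^ 2 * ε * E / P) * (2 * b ^ 2 * ε * E / P) * u (x / P) (y / P) τ
          + 2 * (2 * b ^ 2 * ε * E / P) * (L (0, 1, 0) / P)
          + deriv (fun z => deriv (fun w => u (x / P) w τ) z) (y / P) / P / P) := by
    rw [evY.deriv_eq, hprod4.deriv, hslY.deriv, hBdef]; ring
  -- e5 : the t-derivative
  have hP0' : (1 - b * ε * Real.exp (-(b * t))) ≠ 0 := by rw [hEdef, hPdef]; exact hP0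
  have h0 : HasDerivAt (fun s : ℝ => -(b * s)) (-b) t := by
    exact ((hasDerivAt_id' t).const_mul b).neg.congr_d (by ring)
  have hexp : HasDerivAt (fun s => Real.exp (-(b * s))) (E * -b) t := by
    have h := h0.exp
    rw [hEdef] at h
    exact h
  have hphi : HasDerivAt (fun s => 1 - b * ε * Real.exp (-(b * s))) (b ^ 2 * ε * E) t := by
    have h := (hasDerivAt_const t (1 : ℝ)).sub (hexp.const_mul (b * ε))
    exact h.congr_d (by ring)
  have hA5 : HasDerivAt (fun s => (1 - b * ε * Real.exp (-(b * s))) ^ (-(2 * d)))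
      (b ^ 2 * ε * E * -(2 * d) * (A / P)) t := by
    have h := hphi.rpow_const (p := -(2 * d)) (Or.inl hP0')
    simp only [hEdef, hPdef] at h
    rw [Real.rpow_sub hP, Real.rpow_one, hAdef] at h
    exact h.congr_d (by ring)
  have hN : HasDerivAt (fun s => 2 * b ^ 2 * ε * Real.exp (-(b * s)) * y)
      (2 * b ^ 2 * ε * (E * -b) * y) t := by
    have h := (hexp.const_mul (2 * b ^ 2 * ε)).mul_const y
    exact h.congr_d (by ring)
  have hB5 : HasDerivAt (fun s => Real.exp (2 * b ^ 2 * ε * Real.exp (-(b * s)) * y /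
      (1 - b * ε * Real.exp (-(b * s)))))
      (B * ((2 * b ^ 2 * ε * (E * -b) * y * P - 2 * b ^ 2 * ε * E * y * (b ^ 2 * ε * E)) /
        P ^ 2)) t := by
    have h := (hN.div hphi hP0').exp
    simp only [Pi.div_apply, hEdef, hPdef, hBdef] at h
    exact h.congr_d (by ring)
  have hL' : HasFDerivAt (fun p : ℝ × ℝ × ℝ => u p.1 p.2.1 p.2.2) L
      (x / (1 - b * ε * Real.exp (-(b * t))), y / (1 - b * ε * Real.exp (-(b * t))),
        t + Real.log (1 - b * ε * Real.exp (-(b * t))) / b) := by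
    rw [hEdef, hPdef, hτdef]; exact hL
  have hXc : HasDerivAt (fun s => x / (1 - b * ε * Real.exp (-(b * s))))
      ((0 * P - x * (b ^ 2 * ε * E)) / P ^ 2) t := by
    have h := (hasDerivAt_const t x).div hphi hP0'
    simp only [hEdef, hPdef] at h
    exact h
  have hYc : HasDerivAt (fun s => y / (1 - b * ε * Real.exp (-(b * s))))
      ((0 * P - y * (b ^ 2 * ε * E)) / P ^ 2) t := by
    have h := (hasDerivAt_const t y).div hphi hP0'
    simp only [hEdef, hPdef] at h
    exact h
  have hTc : HasDerivAt (fun s => s + Real.log (1 - b * ε * Real.exp (-(b * s))) / b)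
      (1 + b ^ 2 * ε * E / P / b) t := by
    have h := (hasDerivAt_id' t).add ((hphi.log hP0').div_const b)
    simp only [hEdef, hPdef] at h
    exact h
  have hγ : HasDerivAt (fun s => ((x / (1 - b * ε * Real.exp (-(b * s))),
      y / (1 - b * ε * Real.exp (-(b * s))),
      s + Real.log (1 - b * ε * Real.exp (-(b * s))) / b) : ℝ × ℝ × ℝ))
      (((0 * P - x * (b ^ 2 * ε * E)) / P ^ 2, (0 * P - y * (b ^ 2 * ε * E)) / P ^ 2,
        1 + b ^ 2 * ε * E / P / b) : ℝ × ℝ × ℝ) t := hXc.prodMk (hYc.prodMk hTc)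
  have hcurve : HasDerivAt (fun s => u (x / (1 - b * ε * Real.exp (-(b * s))))
      (y / (1 - b * ε * Real.exp (-(b * s))))
      (s + Real.log (1 - b * ε * Real.exp (-(b * s))) / b))
      ((0 * P - x * (b ^ 2 * ε * E)) / P ^ 2 * L (1, 0, 0)
        + (0 * P - y * (b ^ 2 * ε * E)) / P ^ 2 * L (0, 1, 0)
        + (1 + b ^ 2 * ε * E / P / b) * L (0, 0, 1)) t := by
    have h := hL'.comp_hasDerivAt t hγ
    rw [clm_decomp3] at h
    exact h
  have h5a : HasDerivAt (fun s => (1 - b * ε * Real.exp (-(b * s))) ^ (-(2 * d)) *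
      Real.exp (2 * b ^ 2 * ε * Real.exp (-(b * s)) * y / (1 - b * ε * Real.exp (-(b * s)))))
      (b ^ 2 * ε * E * -(2 * d) * (A / P) * B +
        A * (B * ((2 * b ^ 2 * ε * (E * -b) * y * P - 2 * b ^ 2 * ε * E * y * (b ^ 2 * ε * E)) /
          P ^ 2))) t := by
    have h := hA5.mul hB5
    simp only [hEdef, hPdef, hAdef, hBdef] at h
    exact h.congr_d (by ring)
  have h5 : HasDerivAt (fun s => (1 - b * ε * Real.exp (-(b * s))) ^ (-(2 * d)) *
      Real.exp (2 * b ^ 2 * ε * Real.exp (-(b * s)) * y / (1 - b * ε * Real.exp (-(b * s)))) *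
      u (x / (1 - b * ε * Real.exp (-(b * s)))) (y / (1 - b * ε * Real.exp (-(b * s))))
        (s + Real.log (1 - b * ε * Real.exp (-(b * s))) / b))
      (A * B * (b ^ 2 * ε * E * -(2 * d) / P * u (x / P) (y / P) τ
        + ((2 * b ^ 2 * ε * (E * -b) * y * P - 2 * b ^ 2 * ε * E * y * (b ^ 2 * ε * E)) / P ^ 2) *
            u (x / P) (y / P) τ
        + (0 * P - x * (b ^ 2 * ε * E)) / P ^ 2 * L (1, 0, 0)
        + (0 * P - y * (b ^ 2 * ε * E)) / P ^ 2 * L (0, 1, 0)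
        + (1 + b ^ 2 * ε * E / P / b) * L (0, 0, 1))) t := by
    have h := h5a.mul hcurve
    simp only [hEdef, hPdef, hAdef, hBdef, hτdef] at h
    exact h.congr_d (by ring)
  -- put everything together
  rw [h5.deriv, e1, e2, e3, e4, hEq0]
  have hQ0 : (1 : ℝ) - b * ε * E ≠ 0 := by rw [hPdef]; exact hP0
  rw [← hPdef]
  field_simp
  ring
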